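/- For the FBSDE symmetry group with terminal condition Y_T = H(X_T): given C¹ functions γ, ξ : [0,T] × ℝ × ℝ → ℝ generating flows φ (on y) and ϕ (on x), the transformed terminal condition φ(T, x, H(x), a) = H(ϕ(T, x, H(x), a)) holds for all a near 0 and all x if and only if γ(T, x, H(x)) = H'(x) ξ(T, x, H(x)) for all x. -/

import Mathlib

open Set Filter

/-- for the FBSDE symmetry group with terminal condition `Y_T = H(X_T)`: given
`C¹` functions `γ, ξ` generating the flows `φ` (on `y`) and `ϕ` (on `x`), the transformed
terminal condition `φ(T, x, H x, a) = H (ϕ(T, x, H x, a))` holds for all `a` near `0` and all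
`x` iff `γ(T, x, H x) = H'(x) ξ(T, x, H x)` for all `x`. -/
theorem stmt14 (T : ℝ) (H : ℝ → ℝ) (hH : ContDiff ℝ 1 H)
    (γ ξ : ℝ → ℝ → ℝ → ℝ)
    (hγ : ContDiff ℝ 1 fun p : ℝ × ℝ × ℝ => γ p.1 p.2.1 p.2.2)
    (hξ : ContDiff ℝ 1 fun p : ℝ × ℝ × ℝ => ξ p.1 p.2.1 p.2.2)
    (φ ϕ : ℝ → ℝ → ℝ → ℝ → ℝ)
    (hφ : ∀ t x y a, HasDerivAt (fun a' => φ t x y a') (γ t (ϕ t x y a) (φ t x y a)) a)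
    (hϕ : ∀ t x y a, HasDerivAt (fun a' => ϕ t x y a') (ξ t (ϕ t x y a) (φ t x y a)) a)
    (hφ0 : ∀ t x y, φ t x y 0 = y) (hϕ0 : ∀ t x y, ϕ t x y 0 = x) :
    (∀ x : ℝ, ∀ᶠ a in nhds (0:ℝ), φ T x (H x) a = H (ϕ T x (H x) a)) ↔
      ∀ x : ℝ, γ T x (H x) = deriv H x * ξ T x (H x) := by
  constructor
  · intro h x
    -- differentiate at a = 0
    have h1 : HasDerivAt (fun a => φ T x (H x) a) (γ T x (H x)) 0 := by
      have := hφ T x (H x) 0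
      rwa [hϕ0, hφ0] at this
    have h2 : HasDerivAt (fun a => H (ϕ T x (H x) a))
        (deriv H x * ξ T x (H x)) 0 := by
      have hHd : HasDerivAt H (deriv H x) (ϕ T x (H x) 0) := by
        rw [hϕ0]
        exact ((hH.differentiable one_ne_zero) x).hasDerivAt
      have := hHd.comp 0 (hϕ T x (H x) 0)
      rwa [hϕ0, hφ0] at this
    have h3 : HasDerivAt (fun a => φ T x (H x) a) (deriv H x * ξ T x (H x)) 0 :=
      h2.congr_of_eventuallyEq (h x)
    exact h1.unique h3
  · intro h x
    -- vector field on ℝ × ℝ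
    set V : ℝ × ℝ → ℝ × ℝ := fun p => (ξ T p.1 p.2, γ T p.1 p.2) with hV
    have hVc : ContDiff ℝ 1 V := by
      apply ContDiff.prodMk
      · exact hξ.comp (contDiff_const.prodMk (contDiff_fst.prodMk contDiff_snd))
      · exact hγ.comp (contDiff_const.prodMk (contDiff_fst.prodMk contDiff_snd))
    -- the 1D vector field x ↦ ξ T x (H x)
    have hFc : ContDiff ℝ 1 (fun z : ℝ => ξ T z (H z)) :=
      hξ.comp (contDiff_const.prodMk (contDiff_id.prodMk hH))
    obtain ⟨f, hf0, ε, hε, hfd⟩ :=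
      (hFc.contDiffAt (x := x)).exists_forall_mem_closedBall_exists_eq_forall_mem_Ioo_hasDerivAt₀ (0 : ℝ)
    -- the two curves
    set u : ℝ → ℝ × ℝ := fun a => (ϕ T x (H x) a, φ T x (H x) a) with hu
    set w : ℝ → ℝ × ℝ := fun a => (f a, H (f a)) with hw
    have hu0 : u 0 = (x, H x) := by simp [hu, hϕ0, hφ0]
    have hw0 : w 0 = (x, H x) := by simp [hw, hf0]
    -- local Lipschitz bound for V
    obtain ⟨K, s, hs, hK⟩ :=
      (hVc.contDiffAt (x := ((x, H x) : ℝ × ℝ))).exists_lipschitzOnWith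
    -- u is an integral curve of V
    have hud : ∀ a, HasDerivAt u (V (u a)) a := fun a =>
      (hϕ T x (H x) a).prodMk (hφ T x (H x) a)
    -- w is an integral curve of V on Ioo (-ε) ε
    have hwd : ∀ a ∈ Ioo (0 - ε) (0 + ε), HasDerivAt w (V (w a)) a := by
      intro a ha
      have h1 := hfd a ha
      have hHd : HasDerivAt H (deriv H (f a)) (f a) :=
        ((hH.differentiable one_ne_zero) (f a)).hasDerivAt
      have h2 := hHd.comp a h1
      rw [show deriv H (f a) * ξ T (f a) (H (f a)) = γ T (f a) (H (f a)) from (h (f a)).symm]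
        at h2
      exact h1.prodMk h2
    -- u and w eventually stay in s and are integral curves
    have hus : ∀ᶠ a in nhds (0:ℝ), HasDerivAt u (V (u a)) a ∧ u a ∈ s := by
      have hc : ContinuousAt u 0 := (hud 0).continuousAt
      have : ∀ᶠ a in nhds (0:ℝ), u a ∈ s := by
        have := hc.preimage_mem_nhds (hu0 ▸ hs)
        filter_upwards [this] with a ha using ha
      filter_upwards [this] with a ha using ⟨hud a, ha⟩
    have hws : ∀ᶠ a in nhds (0:ℝ), HasDerivAt w (V (w a)) a ∧ w a ∈ s := by
      have hIoo : Ioo (0 - ε) (0 + ε) ∈ nhds (0:ℝ) :=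
        Ioo_mem_nhds (by linarith) (by linarith)
      have hc : ContinuousAt w 0 := (hwd 0 (by constructor <;> linarith)).continuousAt
      have hmem : ∀ᶠ a in nhds (0:ℝ), w a ∈ s := by
        have := hc.preimage_mem_nhds (hw0 ▸ hs)
        filter_upwards [this] with a ha using ha
      filter_upwards [hmem, hIoo] with a ha ha' using ⟨hwd a ha', ha⟩
    have huw : u =ᶠ[nhds (0:ℝ)] w :=
      ODE_solution_unique_of_eventually (v := fun _ => V) (s := fun _ => s)
        (Filter.Eventually.of_forall (fun _ => hK)) hus hws (hu0.trans hw0.symm)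
    filter_upwards [huw] with a ha
    have h1 : ϕ T x (H x) a = f a := congrArg Prod.fst ha
    have h2 : φ T x (H x) a = H (f a) := congrArg Prod.snd ha
    rw [h2, h1]
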